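/- Define the linear operators N_b := ½(b⁺∘b⁻ + b⁻∘b⁺) − (p/2)·id and N_f := ½(f⁺∘f⁻ − f⁻∘f⁺) + (p/2)·id on V. Then every basis vector is a simultaneous eigenvector: for all integers m ≥ 0, 0 ≤ n ≤ p, N_b φ_{m,n} = m φ_{m,n} and N_f φ_{m,n} = n φ_{m,n}; and for all integers m ≥ 1, 1 ≤ n ≤ p, N_b ψ_{m,n} = m ψ_{m,n} and N_f ψ_{m,n} = n ψ_{m,n}. -/

import Mathlib

open scoped BigOperators

/-- Indices of the basis vectors `φ_{m,n}`: pairs `(m,n)` of naturals with `n ≤ p`. -/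
abbrev PhiIdx (p : ℕ) := {mn : ℕ × ℕ // mn.2 ≤ p}

/-- Indices of the basis vectors `ψ_{m,n}`: pairs `(m,n)` of naturals with
`1 ≤ m` and `1 ≤ n ≤ p - 1`. -/
abbrev PsiIdx (p : ℕ) := {mn : ℕ × ℕ // 1 ≤ mn.1 ∧ 1 ≤ mn.2 ∧ mn.2 + 1 ≤ p}

/-- The index set of the basis of the Fock-like carrier space. -/
abbrev FockIdx (p : ℕ) := PhiIdx p ⊕ PsiIdx p

/-- The Fock-like carrier space: the free `ℂ`-vector space on the basis
`{φ_{m,n} : m ≥ 0, 0 ≤ n ≤ p} ∪ {ψ_{m,n} : m ≥ 1, 1 ≤ n ≤ p−1}`. -/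
abbrev FockV (p : ℕ) := FockIdx p →₀ ℂ

/-- The vector `φ_{m,n}`, extended by `0` outside the range `m ≥ 0`, `0 ≤ n ≤ p`. -/
noncomputable def phi (p : ℕ) (m n : ℤ) : FockV p :=
  if h : 0 ≤ m ∧ 0 ≤ n ∧ n ≤ (p : ℤ) then
    Finsupp.single (Sum.inl ⟨(m.toNat, n.toNat), by show n.toNat ≤ p; omega⟩) 1
  else 0

/-- The vector `ψ_{m,n}`, extended by the conventions `ψ_{m,0} = ψ_{0,n} = 0`,
`ψ_{m,p} = (1/p)·φ_{m,p}` (for `m ≥ 1`) and `ψ_{m,n} = 0` outside the range. -/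
noncomputable def psi (p : ℕ) (m n : ℤ) : FockV p :=
  if h : 1 ≤ m ∧ 1 ≤ n ∧ n ≤ (p : ℤ) - 1 then
    Finsupp.single (Sum.inr ⟨(m.toNat, n.toNat),
      ⟨by show 1 ≤ m.toNat; omega, by show 1 ≤ n.toNat; omega,
       by show n.toNat + 1 ≤ p; omega⟩⟩) 1
  else if 1 ≤ m ∧ n = (p : ℤ) then (1 / (p : ℂ)) • phi p m n
  else 0

/-- Image of the basis vector `φ_{m,n}` under `b⁺`. -/
noncomputable def bpPhi (p : ℕ) (m n : ℤ) : FockV p :=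
  ((-1 : ℂ) ^ n) • phi p (m + 1) n - (2 * (n : ℂ) * (-1 : ℂ) ^ n) • psi p (m + 1) n

/-- Image of the basis vector `ψ_{m,n}` under `b⁺`. -/
noncomputable def bpPsi (p : ℕ) (m n : ℤ) : FockV p :=
  (-(-1 : ℂ) ^ n) • psi p (m + 1) n

/-- Image of the basis vector `φ_{m,n}` under `b⁻`. -/
noncomputable def bmPhi (p : ℕ) (m n : ℤ) : FockV p :=
  if Even m then
    ((-1 : ℂ) ^ n * (m : ℂ)) • phi p (m - 1) n
      - (2 * (-1 : ℂ) ^ n * (n : ℂ) * (m : ℂ)) • psi p (m - 1) n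
  else
    (-(-1 : ℂ) ^ n * (2 * (n : ℂ) - (m : ℂ) - ((p : ℂ) - 1))) • phi p (m - 1) n
      - (2 * (-1 : ℂ) ^ n * (n : ℂ) * ((m : ℂ) - 1)) • psi p (m - 1) n

/-- Image of the basis vector `ψ_{m,n}` under `b⁻`. -/
noncomputable def bmPsi (p : ℕ) (m n : ℤ) : FockV p :=
  if Even m then
    (-(-1 : ℂ) ^ n) • phi p (m - 1) n
      + ((-1 : ℂ) ^ n * (2 * (n : ℂ) - (m : ℂ) - (p : ℂ))) • psi p (m - 1) n
  else
    (-(-1 : ℂ) ^ n) • phi p (m - 1) n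
      - ((-1 : ℂ) ^ n * ((m : ℂ) - 1)) • psi p (m - 1) n

/-- Image of the basis vector `φ_{m,n}` under `f⁺`. -/
noncomputable def fpPhi (p : ℕ) (m n : ℤ) : FockV p := phi p m (n + 1)

/-- Image of the basis vector `ψ_{m,n}` under `f⁺`. -/
noncomputable def fpPsi (p : ℕ) (m n : ℤ) : FockV p := psi p m (n + 1)

/-- Image of the basis vector `φ_{m,n}` under `f⁻`. -/
noncomputable def fmPhi (p : ℕ) (m n : ℤ) : FockV p :=
  ((n : ℂ) * ((p : ℂ) + 1 - (n : ℂ))) • phi p m (n - 1)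

/-- Image of the basis vector `ψ_{m,n}` under `f⁻`. -/
noncomputable def fmPsi (p : ℕ) (m n : ℤ) : FockV p :=
  phi p m (n - 1) + (((n : ℂ) - 1) * ((p : ℂ) - (n : ℂ))) • psi p m (n - 1)

/-- The linear operator on the Fock-like space determined by its values `F m n`
on the basis vectors `φ_{m,n}` and `G m n` on the basis vectors `ψ_{m,n}`. -/
noncomputable def mkOp (p : ℕ) (F G : ℤ → ℤ → FockV p) : Module.End ℂ (FockV p) :=
  Finsupp.lift (FockV p) ℂ (FockIdx p) fun x =>
    match x with
    | Sum.inl a => F (a.1.1 : ℤ) (a.1.2 : ℤ)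
    | Sum.inr a => G (a.1.1 : ℤ) (a.1.2 : ℤ)

/-- The operator `b⁺`. -/
noncomputable def opBp (p : ℕ) : Module.End ℂ (FockV p) := mkOp p (bpPhi p) (bpPsi p)

/-- The operator `b⁻`. -/
noncomputable def opBm (p : ℕ) : Module.End ℂ (FockV p) := mkOp p (bmPhi p) (bmPsi p)

/-- The operator `f⁺`. -/
noncomputable def opFp (p : ℕ) : Module.End ℂ (FockV p) := mkOp p (fpPhi p) (fpPsi p)

/-- The operator `f⁻`. -/
noncomputable def opFm (p : ℕ) : Module.End ℂ (FockV p) := mkOp p (fmPhi p) (fmPsi p)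

/-- `b^ξ` for a sign `ξ`: `b 1 = b⁺`, `b (-1) = b⁻`. -/
noncomputable def opB (p : ℕ) (ξ : ℤ) : Module.End ℂ (FockV p) :=
  if ξ = 1 then opBp p else opBm p

/-- `f^ξ` for a sign `ξ`: `f 1 = f⁺`, `f (-1) = f⁻`. -/
noncomputable def opF (p : ℕ) (ξ : ℤ) : Module.End ℂ (FockV p) :=
  if ξ = 1 then opFp p else opFm p

/-- The commutator `[X, Y] = X∘Y − Y∘X` of operators. -/
noncomputable def opComm {p : ℕ} (X Y : Module.End ℂ (FockV p)) : Module.End ℂ (FockV p) :=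
  X * Y - Y * X

/-- The anticommutator `{X, Y} = X∘Y + Y∘X` of operators. -/
noncomputable def opAComm {p : ℕ} (X Y : Module.End ℂ (FockV p)) : Module.End ℂ (FockV p) :=
  X * Y + Y * X

/-- A sign, i.e. `+1` or `-1`, regarded as an integer. -/
def IsSign (x : ℤ) : Prop := x = 1 ∨ x = -1

/-- The number operator `N_b := ½(b⁺∘b⁻ + b⁻∘b⁺) − (p/2)·id`. -/
noncomputable def opNb (p : ℕ) : Module.End ℂ (FockV p) :=
  (1 / 2 : ℂ) • (opBp p * opBm p + opBm p * opBp p) - ((p : ℂ) / 2) • 1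

/-- The number operator `N_f := ½(f⁺∘f⁻ − f⁻∘f⁺) + (p/2)·id`. -/
noncomputable def opNf (p : ℕ) : Module.End ℂ (FockV p) :=
  (1 / 2 : ℂ) • (opFp p * opFm p - opFm p * opFp p) + ((p : ℂ) / 2) • 1

section Helpers
variable {p : ℕ}

lemma mkOp_single_inl (F G : ℤ → ℤ → FockV p) (a : PhiIdx p) :
    mkOp p F G (Finsupp.single (Sum.inl a) 1) = F (a.1.1 : ℤ) (a.1.2 : ℤ) := by
  simp [mkOp]

lemma mkOp_single_inr (F G : ℤ → ℤ → FockV p) (a : PsiIdx p) :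
    mkOp p F G (Finsupp.single (Sum.inr a) 1) = G (a.1.1 : ℤ) (a.1.2 : ℤ) := by
  simp [mkOp]

lemma phi_zero {m n : ℤ} (h : ¬(0 ≤ m ∧ 0 ≤ n ∧ n ≤ (p:ℤ))) : phi p m n = 0 := by
  rw [phi, dif_neg h]

lemma psi_zero (hp : 1 ≤ p) {m n : ℤ} (h : ¬(1 ≤ m ∧ 1 ≤ n ∧ n ≤ (p:ℤ))) : psi p m n = 0 := by
  rw [psi, dif_neg (by omega), if_neg (by omega)]

lemma psi_top (hp : 1 ≤ p) {m : ℤ} (hm : 1 ≤ m) :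
    psi p m (p:ℤ) = (1 / (p:ℂ)) • phi p m (p:ℤ) := by
  rw [psi, dif_neg (by omega), if_pos ⟨hm, rfl⟩]

lemma mkOp_phi (F G : ℤ → ℤ → FockV p) {m n : ℤ} (hm : 0 ≤ m) (hn : 0 ≤ n)
    (hnp : n ≤ (p:ℤ)) : mkOp p F G (phi p m n) = F m n := by
  rw [phi, dif_pos ⟨hm, hn, hnp⟩, mkOp_single_inl]
  show F ((m.toNat : ℤ)) ((n.toNat : ℤ)) = F m n
  rw [Int.toNat_of_nonneg hm, Int.toNat_of_nonneg hn]

lemma mkOp_psi (F G : ℤ → ℤ → FockV p) {m n : ℤ} (hm : 1 ≤ m) (hn : 1 ≤ n)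
    (hnp : n ≤ (p:ℤ) - 1) : mkOp p F G (psi p m n) = G m n := by
  rw [psi, dif_pos ⟨hm, hn, hnp⟩, mkOp_single_inr]
  show G ((m.toNat : ℤ)) ((n.toNat : ℤ)) = G m n
  rw [Int.toNat_of_nonneg (by omega), Int.toNat_of_nonneg (by omega)]

lemma mkOp_psi_top (F G : ℤ → ℤ → FockV p) (hp : 1 ≤ p) {m : ℤ} (hm : 1 ≤ m) :
    mkOp p F G (psi p m (p:ℤ)) = (1 / (p:ℂ)) • F m (p:ℤ) := by
  rw [psi_top hp hm, map_smul, mkOp_phi F G (by omega) (by omega) le_rfl]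

end Helpers
section ApplyLemmas
variable {p : ℕ}

lemma opBp_def : opBp p = mkOp p (bpPhi p) (bpPsi p) := rfl
lemma opBm_def : opBm p = mkOp p (bmPhi p) (bmPsi p) := rfl
lemma opFp_def : opFp p = mkOp p (fpPhi p) (fpPsi p) := rfl
lemma opFm_def : opFm p = mkOp p (fmPhi p) (fmPsi p) := rfl

lemma opBp_phi (hp : 1 ≤ p) {m n : ℤ} (hm : m ≠ -1) :
    opBp p (phi p m n) = bpPhi p m n := by
  by_cases h : 0 ≤ m ∧ 0 ≤ n ∧ n ≤ (p:ℤ)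
  · exact mkOp_phi _ _ h.1 h.2.1 h.2.2
  · rw [phi_zero h, map_zero, bpPhi, phi_zero (by omega), psi_zero hp (by omega)]
    simp

lemma opBm_phi (hp : 1 ≤ p) {m n : ℤ} : opBm p (phi p m n) = bmPhi p m n := by
  by_cases h : 0 ≤ m ∧ 0 ≤ n ∧ n ≤ (p:ℤ)
  · exact mkOp_phi _ _ h.1 h.2.1 h.2.2
  · rw [phi_zero h, map_zero, bmPhi, phi_zero (by omega), psi_zero hp (by omega)]
    split_ifs <;> simp

lemma opFp_phi (hp : 1 ≤ p) {m n : ℤ} (hn : n ≠ -1) :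
    opFp p (phi p m n) = fpPhi p m n := by
  by_cases h : 0 ≤ m ∧ 0 ≤ n ∧ n ≤ (p:ℤ)
  · exact mkOp_phi _ _ h.1 h.2.1 h.2.2
  · rw [phi_zero h, map_zero, fpPhi, phi_zero (by omega)]

lemma opFm_phi (hp : 1 ≤ p) {m n : ℤ} : opFm p (phi p m n) = fmPhi p m n := by
  by_cases h : 0 ≤ m ∧ 0 ≤ n ∧ n ≤ (p:ℤ)
  · exact mkOp_phi _ _ h.1 h.2.1 h.2.2
  · rw [phi_zero h, map_zero, fmPhi]
    by_cases hn : n = (p:ℤ) + 1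
    · subst hn
      rw [show ((p:ℤ) + 1 - 1) = (p:ℤ) by ring]
      push_cast
      rw [show ((p:ℂ) + 1) * ((p:ℂ) + 1 - ((p:ℂ) + 1)) = 0 by ring, zero_smul]
    · rw [phi_zero (by omega), smul_zero]

lemma opBp_psi (hp : 1 ≤ p) {m n : ℤ} (hm : m ≠ 0) :
    opBp p (psi p m n) = bpPsi p m n := by
  have hp0 : (p:ℂ) ≠ 0 := Nat.cast_ne_zero.2 (by omega)
  by_cases h : 1 ≤ m ∧ 1 ≤ n ∧ n ≤ (p:ℤ) - 1
  · exact mkOp_psi _ _ h.1 h.2.1 h.2.2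
  · by_cases h2 : 1 ≤ m ∧ n = (p:ℤ)
    · obtain ⟨hm1, rfl⟩ := h2
      rw [opBp_def, mkOp_psi_top _ _ hp hm1, bpPhi, bpPsi, psi_top hp (by omega)]
      match_scalars
      field_simp
      ring
    · rw [psi_zero hp (by omega), map_zero, bpPsi, psi_zero hp (by omega), smul_zero]

lemma opFp_psi (hp : 1 ≤ p) {m n : ℤ} (hn : n ≠ 0) :
    opFp p (psi p m n) = fpPsi p m n := by
  by_cases h : 1 ≤ m ∧ 1 ≤ n ∧ n ≤ (p:ℤ) - 1
  · exact mkOp_psi _ _ h.1 h.2.1 h.2.2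
  · by_cases h2 : 1 ≤ m ∧ n = (p:ℤ)
    · obtain ⟨hm1, rfl⟩ := h2
      rw [opFp_def, mkOp_psi_top _ _ hp hm1, fpPhi, fpPsi, phi_zero (by omega), psi_zero hp (by omega),
        smul_zero]
    · rw [psi_zero hp (by omega), map_zero, fpPsi, psi_zero hp (by omega)]

lemma opFm_psi (hp : 1 ≤ p) {m n : ℤ} (hm : m ≠ 0) : opFm p (psi p m n) = fmPsi p m n := by
  have hp0 : (p:ℂ) ≠ 0 := Nat.cast_ne_zero.2 (by omega)
  by_cases h : 1 ≤ m ∧ 1 ≤ n ∧ n ≤ (p:ℤ) - 1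
  · exact mkOp_psi _ _ h.1 h.2.1 h.2.2
  · by_cases h2 : 1 ≤ m ∧ n = (p:ℤ)
    · obtain ⟨hm1, rfl⟩ := h2
      rw [opFm_def, mkOp_psi_top _ _ hp hm1, fmPhi, fmPsi]
      match_scalars
      · field_simp
        ring
      · push_cast
        ring
    · by_cases h3 : 1 ≤ m ∧ n = (p:ℤ) + 1
      · obtain ⟨hm1, rfl⟩ := h3
        rw [psi_zero hp (by omega), map_zero, fmPsi,
          show ((p:ℤ) + 1 - 1) = (p:ℤ) by ring, psi_top hp hm1]
        match_scalars
        push_cast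
        field_simp
        ring
      · rw [psi_zero hp (by omega), map_zero, fmPsi, phi_zero (by omega),
          psi_zero hp (by omega), smul_zero, add_zero]

lemma opBm_psi (hp : 1 ≤ p) {m n : ℤ} (hn : n ≠ 0) :
    opBm p (psi p m n) = bmPsi p m n := by
  have hp0 : (p:ℂ) ≠ 0 := Nat.cast_ne_zero.2 (by omega)
  by_cases h : 1 ≤ m ∧ 1 ≤ n ∧ n ≤ (p:ℤ) - 1
  · exact mkOp_psi _ _ h.1 h.2.1 h.2.2
  · by_cases h2 : 1 ≤ m ∧ n = (p:ℤ)
    · obtain ⟨hm1, rfl⟩ := h2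
      rw [opBm_def, mkOp_psi_top _ _ hp hm1, bmPhi, bmPsi]
      by_cases hev : Even m
      · have hm2 : 2 ≤ m := by
          rcases hev with ⟨k, rfl⟩; omega
        rw [if_pos hev, if_pos hev, psi_top hp (by omega)]
        match_scalars
        push_cast
        field_simp
        ring
      · rw [if_neg hev, if_neg hev]
        by_cases hm1' : m = 1
        · subst hm1'
          rw [psi_zero hp (by omega)]
          match_scalars
          push_cast
          field_simp
          ring
        · rw [psi_top hp (by omega)]
          match_scalars
          push_cast
          field_simp
          ring
    · rw [psi_zero hp (by omega), map_zero, bmPsi, phi_zero (by omega), psi_zero hp (by omega)]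
      split_ifs <;> simp

end ApplyLemmas
section AuxComp
variable {p : ℕ}

lemma Nf_phi_aux (hp : 1 ≤ p) {m n : ℤ} (hm : 0 ≤ m) (hn : 0 ≤ n) (hnp : n ≤ (p:ℤ)) :
    opFp p (opFm p (phi p m n)) - opFm p (opFp p (phi p m n))
      = (2*(n:ℂ) - (p:ℂ)) • phi p m n := by
  rw [opFm_phi hp, opFp_phi hp (by omega), fmPhi, fpPhi, map_smul, opFm_phi hp, fmPhi,
    add_sub_cancel_right]
  by_cases hn0 : n = 0
  · subst hn0
    rw [phi_zero (p := p) (m := m) (n := (0:ℤ) - 1) (by omega)]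
    match_scalars <;> (push_cast; ring)
  · rw [opFp_phi hp (by omega), fpPhi, sub_add_cancel]
    match_scalars <;> (push_cast; ring)

lemma Nf_psi_aux (hp : 1 ≤ p) {m n : ℤ} (hm : 1 ≤ m) (hn : 1 ≤ n) (hnp : n ≤ (p:ℤ)) :
    opFp p (opFm p (psi p m n)) - opFm p (opFp p (psi p m n))
      = (2*(n:ℂ) - (p:ℂ)) • psi p m n := by
  rw [opFm_psi hp (by omega), opFp_psi hp (by omega), fmPsi, fpPsi, opFm_psi hp (by omega),
    fmPsi, add_sub_cancel_right, map_add, map_smul]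
  rw [opFp_phi hp (by omega), fpPhi, sub_add_cancel]
  by_cases hn1 : n = 1
  · subst hn1
    rw [psi_zero (p := p) (m := m) (n := (1:ℤ) - 1) hp (by omega)]
    match_scalars <;> (push_cast; ring)
  · rw [opFp_psi hp (by omega), fpPsi, sub_add_cancel]
    match_scalars <;> (push_cast; ring)

end AuxComp
section AuxCompB
variable {p : ℕ}

lemma Nb_phi_aux (hp : 1 ≤ p) {m n : ℤ} (hm : 0 ≤ m) (hn : 0 ≤ n) (hnp : n ≤ (p:ℤ)) :
    opBp p (opBm p (phi p m n)) + opBm p (opBp p (phi p m n))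
      = (2*(m:ℂ) + (p:ℂ)) • phi p m n := by
  have hp0 : (p:ℂ) ≠ 0 := Nat.cast_ne_zero.2 (by omega)
  -- A part: opBm (opBp φ)
  rw [opBm_phi hp, opBp_phi hp (by omega), bpPhi, map_sub, map_smul, map_smul, opBm_phi hp]
  by_cases hme : Even m
  · have hmo1 : ¬ Even (m + 1) := by simp [Int.even_add_one, hme]
    obtain ⟨k, hk⟩ := id hme
    simp only [bmPhi, if_pos hme, if_neg hmo1, add_sub_cancel_right]
    by_cases hn0 : n = 0
    · subst hn0
      rw [psi_zero (p := p) (m := m + 1) (n := 0) hp (by omega)]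
      by_cases hm0 : m = 0
      · subst hm0
        simp only [show ((0:ℤ) - 1) = -1 by ring,
          phi_zero (p := p) (m := (-1:ℤ)) (n := (0:ℤ)) (by omega),
          psi_zero (p := p) (m := (-1:ℤ)) (n := (0:ℤ)) hp (by omega)]
        simp only [map_sub, map_smul, map_zero, smul_zero, sub_zero, sub_self]
        match_scalars <;> (push_cast; ring)
      · rw [map_sub, map_smul, map_smul, opBp_phi hp (by omega),
          psi_zero (p := p) (m := m - 1) (n := 0) hp (by omega), map_zero, smul_zero, sub_zero,
          bpPhi, sub_add_cancel, psi_zero (p := p) (m := m) (n := 0) hp (by omega)]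
        match_scalars <;> (push_cast; ring)
    · rw [opBm_psi hp hn0]
      simp only [bmPsi, if_neg hmo1, add_sub_cancel_right]
      by_cases hm0 : m = 0
      · subst hm0
        simp only [show ((0:ℤ) - 1) = -1 by ring,
          phi_zero (p := p) (m := (-1:ℤ)) (n := n) (by omega),
          psi_zero (p := p) (m := (-1:ℤ)) (n := n) hp (by omega)]
        simp only [map_sub, map_smul, map_zero, smul_zero, sub_zero, sub_self]
        rcases Int.even_or_odd n with hne | hno
        · simp only [Even.neg_one_zpow hne]
          match_scalars <;> (push_cast; ring)
        · simp only [Odd.neg_one_zpow hno]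
          match_scalars <;> (push_cast; ring)
      · rw [map_sub, map_smul, map_smul, opBp_phi hp (by omega), opBp_psi hp (by omega),
          bpPhi, bpPsi, sub_add_cancel]
        rcases Int.even_or_odd n with hne | hno
        · simp only [Even.neg_one_zpow hne]
          match_scalars <;> (push_cast; ring)
        · simp only [Odd.neg_one_zpow hno]
          match_scalars <;> (push_cast; ring)
  · have hme1 : Even (m + 1) := by
      rcases Int.even_or_odd m with h | h
      · exact absurd h hme
      · rcases h with ⟨k, hk⟩; exact ⟨k + 1, by omega⟩
    obtain ⟨k, hk⟩ := id hme1
    have hm1 : 1 ≤ m := by omega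
    simp only [bmPhi, if_neg hme, if_pos hme1, add_sub_cancel_right]
    by_cases hn0 : n = 0
    · subst hn0
      rw [psi_zero (p := p) (m := m + 1) (n := 0) hp (by omega)]
      by_cases hm1' : m = 1
      · subst hm1'
        rw [psi_zero (p := p) (m := (1:ℤ) - 1) (n := 0) hp (by omega)]
        rw [map_sub, map_smul, map_smul, opBp_phi hp (by omega), map_zero, smul_zero, sub_zero,
          bpPhi, sub_add_cancel, psi_zero (p := p) (m := (1:ℤ)) (n := 0) hp (by omega)]
        match_scalars <;> (push_cast; ring)
      · rw [map_sub, map_smul, map_smul, opBp_phi hp (by omega), opBp_psi hp (by omega),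
          bpPhi, bpPsi, sub_add_cancel, psi_zero (p := p) (m := m) (n := 0) hp (by omega)]
        match_scalars <;> (push_cast; ring)
    · rw [opBm_psi hp hn0]
      simp only [bmPsi, if_pos hme1, add_sub_cancel_right]
      by_cases hm1' : m = 1
      · subst hm1'
        rw [psi_zero (p := p) (m := (1:ℤ) - 1) (n := n) hp (by omega)]
        rw [map_sub, map_smul, map_smul, opBp_phi hp (by omega), map_zero, smul_zero, sub_zero,
          bpPhi, sub_add_cancel]
        rcases Int.even_or_odd n with hne | hno
        · simp only [Even.neg_one_zpow hne]
          match_scalars <;> (push_cast; ring)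
        · simp only [Odd.neg_one_zpow hno]
          match_scalars <;> (push_cast; ring)
      · rw [map_sub, map_smul, map_smul, opBp_phi hp (by omega), opBp_psi hp (by omega),
          bpPhi, bpPsi, sub_add_cancel]
        rcases Int.even_or_odd n with hne | hno
        · simp only [Even.neg_one_zpow hne]
          match_scalars <;> (push_cast; ring)
        · simp only [Odd.neg_one_zpow hno]
          match_scalars <;> (push_cast; ring)

end AuxCompB
section AuxCompB2
variable {p : ℕ}

lemma Nb_psi_aux (hp : 1 ≤ p) {m n : ℤ} (hm : 1 ≤ m) (hn : 1 ≤ n) (hnp : n ≤ (p:ℤ)) :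
    opBp p (opBm p (psi p m n)) + opBm p (opBp p (psi p m n))
      = (2*(m:ℂ) + (p:ℂ)) • psi p m n := by
  have hp0 : (p:ℂ) ≠ 0 := Nat.cast_ne_zero.2 (by omega)
  rw [opBm_psi hp (by omega), opBp_psi hp (by omega), bpPsi, map_smul,
    opBm_psi hp (by omega)]
  by_cases hme : Even m
  · have hmo1 : ¬ Even (m + 1) := by simp [Int.even_add_one, hme]
    obtain ⟨k, hk⟩ := id hme
    simp only [bmPsi, if_pos hme, if_neg hmo1, add_sub_cancel_right]
    rw [map_add, map_smul, map_smul, opBp_phi hp (by omega), opBp_psi hp (by omega),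
      bpPhi, bpPsi, sub_add_cancel]
    rcases Int.even_or_odd n with hne | hno
    · simp only [Even.neg_one_zpow hne]
      match_scalars <;> (push_cast; ring)
    · simp only [Odd.neg_one_zpow hno]
      match_scalars <;> (push_cast; ring)
  · have hme1 : Even (m + 1) := by
      rcases Int.even_or_odd m with h | h
      · exact absurd h hme
      · rcases h with ⟨j, hj⟩; exact ⟨j + 1, by omega⟩
    obtain ⟨k, hk⟩ := id hme1
    simp only [bmPsi, if_neg hme, if_pos hme1, add_sub_cancel_right]
    by_cases hm1 : m = 1
    · subst hm1
      rw [psi_zero (p := p) (m := (1:ℤ) - 1) (n := n) hp (by omega)]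
      rw [map_sub, map_smul, map_smul, opBp_phi hp (by omega), map_zero, smul_zero, sub_zero,
        bpPhi, sub_add_cancel]
      rcases Int.even_or_odd n with hne | hno
      · simp only [Even.neg_one_zpow hne]
        match_scalars <;> (push_cast; ring)
      · simp only [Odd.neg_one_zpow hno]
        match_scalars <;> (push_cast; ring)
    · rw [map_sub, map_smul, map_smul, opBp_phi hp (by omega), opBp_psi hp (by omega),
        bpPhi, bpPsi, sub_add_cancel]
      rcases Int.even_or_odd n with hne | hno
      · simp only [Even.neg_one_zpow hne]
        match_scalars <;> (push_cast; ring)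
      · simp only [Odd.neg_one_zpow hno]
        match_scalars <;> (push_cast; ring)

end AuxCompB2

/-- Every basis vector is a simultaneous eigenvector of `N_b` and `N_f`,
with eigenvalues `m` and `n` respectively. -/
theorem Nb_Nf_eigenvectors (p : ℕ) (hp : 1 ≤ p) :
    (∀ m n : ℤ, 0 ≤ m → 0 ≤ n → n ≤ (p : ℤ) →
      opNb p (phi p m n) = (m : ℂ) • phi p m n ∧
      opNf p (phi p m n) = (n : ℂ) • phi p m n) ∧
    (∀ m n : ℤ, 1 ≤ m → 1 ≤ n → n ≤ (p : ℤ) →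
      opNb p (psi p m n) = (m : ℂ) • psi p m n ∧
      opNf p (psi p m n) = (n : ℂ) • psi p m n) := by
  have hp0 : (p:ℂ) ≠ 0 := Nat.cast_ne_zero.2 (by omega)
  constructor
  · intro m n hm hn hnp
    constructor
    · simp only [opNb, LinearMap.sub_apply, LinearMap.smul_apply, LinearMap.add_apply,
        Module.End.mul_apply, Module.End.one_apply]
      rw [Nb_phi_aux hp hm hn hnp]
      match_scalars <;> (push_cast; ring)
    · simp only [opNf, LinearMap.sub_apply, LinearMap.smul_apply, LinearMap.add_apply,
        Module.End.mul_apply, Module.End.one_apply]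
      rw [Nf_phi_aux hp hm hn hnp]
      match_scalars <;> (push_cast; ring)
  · intro m n hm hn hnp
    constructor
    · simp only [opNb, LinearMap.sub_apply, LinearMap.smul_apply, LinearMap.add_apply,
        Module.End.mul_apply, Module.End.one_apply]
      rw [Nb_psi_aux hp hm hn hnp]
      match_scalars <;> (push_cast; ring)
    · simp only [opNf, LinearMap.sub_apply, LinearMap.smul_apply, LinearMap.add_apply,
        Module.End.mul_apply, Module.End.one_apply]
      rw [Nf_psi_aux hp hm hn hnp]
      match_scalars <;> (push_cast; ring)
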